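/- Let V be a finite-dimensional real inner product space with basis e₁,…,eₙ such that ⟨eᵢ, eⱼ⟩ ≤ 0 for all i ≠ j, and let e₁*,…,eₙ* be the dual basis. Define the graph Γ on vertices {1,…,n} with an edge between i and j iff ⟨eᵢ, eⱼ⟩ < 0. Then ⟨eᵢ*, eⱼ*⟩ > 0 if and only if i and j lie in the same connected component of Γ. -/

import Mathlib

open scoped RealInnerProductSpace
open Finset

section Aux

variable {V : Type*} [NormedAddCommGroup V] [InnerProductSpace ℝ V]
    {n : ℕ} (e : Module.Basis (Fin n) ℝ V) (estar : Fin n → V)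
    (hdual : ∀ i j : Fin n, ⟪estar i, e j⟫ = if i = j then (1 : ℝ) else 0)

include hdual

lemma my_repr_eq (v : V) (k : Fin n) : ⟪estar k, v⟫ = e.repr v k := by
  conv_lhs => rw [← e.sum_repr v]
  rw [inner_sum]
  simp [real_inner_smul_right, hdual]

lemma my_expand (v : V) : ∑ k, ⟪estar k, v⟫ • e k = v := by
  rw [Finset.sum_congr rfl fun k _ => by rw [my_repr_eq e estar hdual]]
  exact e.sum_repr v

lemma my_inner_estar_sum (i : Fin n) (s : Finset (Fin n)) (g : Fin n → ℝ) :
    ⟪estar i, ∑ k ∈ s, g k • e k⟫ = if i ∈ s then g i else 0 := by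
  rw [inner_sum]
  simp only [real_inner_smul_right, hdual, mul_ite, mul_one, mul_zero]
  exact Finset.sum_ite_eq s i g

lemma my_key (i : Fin n) (T : Finset (Fin n)) (hiT : i ∉ T)
    (hterm : ∀ k, k ∉ T → ∀ j ∈ T,
      0 ≤ ⟪estar k, estar i⟫ * (⟪estar j, estar i⟫ * ⟪e k, e j⟫)) :
    ∀ j ∈ T, ⟪estar j, estar i⟫ = 0 := by
  set f : Fin n → ℝ := fun k => ⟪estar k, estar i⟫ with hf
  set y : V := ∑ j ∈ T, f j • e j with hy
  have h1 : ⟪estar i, y⟫ = 0 := by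
    rw [hy, my_inner_estar_sum e estar hdual, if_neg hiT]
  have h2 : estar i = y + ∑ k ∈ Tᶜ, f k • e k := by
    rw [hy, Finset.sum_add_sum_compl T (fun k => f k • e k)]
    exact (my_expand e estar hdual (estar i)).symm
  have h3 : 0 ≤ ⟪∑ k ∈ Tᶜ, f k • e k, y⟫ := by
    rw [sum_inner]
    apply Finset.sum_nonneg
    intro k hk
    rw [real_inner_smul_left, hy, inner_sum]
    simp only [real_inner_smul_right]
    rw [Finset.mul_sum]
    apply Finset.sum_nonneg
    intro j hj
    exact hterm k (Finset.mem_compl.mp hk) j hj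
  have h4 : ⟪y, y⟫ = 0 := by
    have : (0 : ℝ) = ⟪y, y⟫ + ⟪∑ k ∈ Tᶜ, f k • e k, y⟫ := by
      rw [← inner_add_left, ← h2, h1]
    have h5 : ⟪y, y⟫ ≤ 0 := by linarith
    exact le_antisymm h5 real_inner_self_nonneg
  have hy0 : y = 0 := inner_self_eq_zero.mp h4
  intro j hj
  have := my_inner_estar_sum e estar hdual j T f
  rw [← hy, hy0, inner_zero_right, if_pos hj] at this
  exact this.symm

variable (hneg : ∀ i j : Fin n, i ≠ j → ⟪e i, e j⟫ ≤ 0)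
include hneg

lemma my_nonneg (i j : Fin n) : 0 ≤ ⟪estar i, estar j⟫ := by
  by_contra hcon
  push_neg at hcon
  set N : Finset (Fin n) := univ.filter (fun k => ⟪estar k, estar i⟫ < 0) with hN
  have hiN : i ∉ N := by
    simp only [hN, Finset.mem_filter, Finset.mem_univ, true_and, not_lt]
    exact real_inner_self_nonneg
  have hterm : ∀ k, k ∉ N → ∀ l ∈ N,
      0 ≤ ⟪estar k, estar i⟫ * (⟪estar l, estar i⟫ * ⟪e k, e l⟫) := by
    intro k hk l hl
    simp only [hN, Finset.mem_filter, Finset.mem_univ, true_and, not_lt] at hk hl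
    have hkl : k ≠ l := fun h => absurd (h ▸ hk) (not_le.mpr hl)
    have h2 := hneg k l hkl
    have h3 := mul_nonneg (neg_nonneg.mpr hl.le) (neg_nonneg.mpr h2)
    nlinarith
  have hjN : j ∈ N := by
    simp only [hN, Finset.mem_filter, Finset.mem_univ, true_and]
    rwa [real_inner_comm]
  have := my_key e estar hdual i N hiN hterm j hjN
  rw [real_inner_comm] at this
  exact absurd this (ne_of_lt hcon)

lemma my_propagate (i j k : Fin n) (hik : i ≠ k) (hzero : ⟪estar i, estar k⟫ = 0)
    (hjk : ⟪e j, e k⟫ < 0) : ⟪estar i, estar j⟫ = 0 := by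
  have hjkne : j ≠ k := by
    intro h
    rw [h] at hjk
    exact absurd real_inner_self_nonneg (not_le.mpr hjk)
  have hid : (0 : ℝ) = ∑ m, ⟪estar m, estar i⟫ * ⟪e m, e k⟫ := by
    have h1 : ⟪estar i, e k⟫ = (0 : ℝ) := by rw [hdual, if_neg hik]
    conv_lhs => rw [← h1, ← my_expand e estar hdual (estar i), sum_inner]
    simp only [real_inner_smul_left]
  rw [← Finset.add_sum_erase _ _ (Finset.mem_univ k)] at hid
  have hzero' : ⟪estar k, estar i⟫ = 0 := by rw [real_inner_comm]; exact hzero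
  rw [hzero', zero_mul, zero_add] at hid
  have hterms : ∀ m ∈ Finset.univ.erase k, ⟪estar m, estar i⟫ * ⟪e m, e k⟫ ≤ 0 := by
    intro m hm
    have hmk : m ≠ k := Finset.ne_of_mem_erase hm
    have h1 : 0 ≤ ⟪estar m, estar i⟫ := my_nonneg e estar hdual hneg m i
    exact mul_nonpos_of_nonneg_of_nonpos h1 (hneg m k hmk)
  have hall := (Finset.sum_eq_zero_iff_of_nonpos hterms).mp hid.symm
  have hj := hall j (Finset.mem_erase.mpr ⟨hjkne, Finset.mem_univ j⟩)
  have := mul_eq_zero.mp hj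
  rcases this with h | h
  · rw [real_inner_comm]; exact h
  · exact absurd h (ne_of_lt hjk)

end Aux

/-- With `e` a basis of a finite dimensional real inner product space with
`⟪e i, e j⟫ ≤ 0` for `i ≠ j` and `estar` the dual basis, one has
`⟪estar i, estar j⟫ > 0` iff `i` and `j` lie in the same connected component of the
graph with an edge between `i ≠ j` iff `⟪e i, e j⟫ < 0`. -/
theorem stmt1 {V : Type*} [NormedAddCommGroup V] [InnerProductSpace ℝ V]
    [FiniteDimensional ℝ V] {n : ℕ} (e : Module.Basis (Fin n) ℝ V) (estar : Fin n → V)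
    (hdual : ∀ i j : Fin n, ⟪estar i, e j⟫ = if i = j then (1 : ℝ) else 0)
    (hneg : ∀ i j : Fin n, i ≠ j → ⟪e i, e j⟫ ≤ 0) :
    ∀ i j : Fin n, 0 < ⟪estar i, estar j⟫ ↔
      (SimpleGraph.fromRel (fun i j : Fin n => ⟪e i, e j⟫ < 0)).Reachable i j := by
  classical
  set G := SimpleGraph.fromRel (fun i j : Fin n => ⟪e i, e j⟫ < 0) with hG
  have hself : ∀ u : Fin n, 0 < ⟪estar u, estar u⟫ := by
    intro u
    refine lt_of_le_of_ne real_inner_self_nonneg fun h => ?_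
    have h0 : estar u = 0 := inner_self_eq_zero.mp h.symm
    have := hdual u u
    rw [h0, inner_zero_left, if_pos rfl] at this
    exact one_ne_zero this.symm
  intro i j
  constructor
  · -- positive → reachable, by contraposition
    intro hpos
    by_contra hreach
    set T : Finset (Fin n) := univ.filter (fun k => ¬ G.Reachable i k) with hT
    have hiT : i ∉ T := by
      simp only [hT, Finset.mem_filter, Finset.mem_univ, true_and, not_not]
      exact SimpleGraph.Reachable.refl i
    have hterm : ∀ k, k ∉ T → ∀ l ∈ T,
        0 ≤ ⟪estar k, estar i⟫ * (⟪estar l, estar i⟫ * ⟪e k, e l⟫) := by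
      intro k hk l hl
      simp only [hT, Finset.mem_filter, Finset.mem_univ, true_and, not_not] at hk hl
      have hkl : k ≠ l := fun h => hl (h ▸ hk)
      have hekl : ⟪e k, e l⟫ = 0 := by
        refine le_antisymm (hneg k l hkl) (not_lt.mp fun hlt => ?_)
        have hadj : G.Adj k l := by
          rw [hG, SimpleGraph.fromRel_adj]
          exact ⟨hkl, Or.inl hlt⟩
        exact hl (hk.trans hadj.reachable)
      rw [hekl, mul_zero, mul_zero]
    have hjT : j ∈ T := by
      simp only [hT, Finset.mem_filter, Finset.mem_univ, true_and]
      exact hreach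
    have := my_key e estar hdual i T hiT hterm j hjT
    rw [real_inner_comm] at this
    exact absurd this (ne_of_gt hpos)
  · -- reachable → positive
    intro hr
    obtain ⟨w⟩ := hr.symm
    clear hr
    induction w with
    | nil => exact hself _
    | @cons u v z hadj p ih =>
      rw [hG, SimpleGraph.fromRel_adj] at hadj
      obtain ⟨huv, hor⟩ := hadj
      have hevu : ⟪e v, e u⟫ < 0 := by
        rcases hor with h | h
        · rwa [real_inner_comm]
        · exact h
      by_cases hiu : z = u
      · rw [hiu]; exact hself u
      · by_contra hcon
        have h0 : ⟪estar z, estar u⟫ = 0 :=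
          le_antisymm (not_lt.mp hcon) (my_nonneg e estar hdual hneg z u)
        have := my_propagate e estar hdual hneg z v u hiu h0 hevu
        exact absurd this (ne_of_gt ih)
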